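/- Let H be a Hilbert space and H_1, ..., H_n closed subspaces of H whose system possesses the inverse best approximation property. For each i = 1, ..., n let {v^{(i)}_α : α ∈ M_i} be a Riesz family of elements of H_i. Then the combined family {v^{(i)}_α : i = 1, ..., n, α ∈ M_i} (indexed by the disjoint union of the M_i) is a Riesz family in H. -/

import Mathlib

noncomputable def orthProjCLM {𝕜 H : Type*} [RCLike 𝕜] [NormedAddCommGroup H]
    [InnerProductSpace 𝕜 H] [CompleteSpace H] (K : Submodule 𝕜 H)
    (hK : IsClosed (K : Set H)) : H →L[𝕜] H :=
  haveI : CompleteSpace K := hK.completeSpace_coe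
  K.subtypeL.comp (K.orthogonalProjection)

/-- The system of closed subspaces `K 0, ..., K (n-1)` possesses the
inverse best approximation property: for arbitrary `x i ∈ K i` there is `y`
whose orthogonal projection onto each `K i` equals `x i`. -/
def IBAP {𝕜 H : Type*} [RCLike 𝕜] [NormedAddCommGroup H] [InnerProductSpace 𝕜 H]
    [CompleteSpace H] {n : ℕ} (K : Fin n → Submodule 𝕜 H)
    (hK : ∀ i, IsClosed ((K i : Set H))) : Prop :=
  ∀ x : Fin n → H, (∀ i, x i ∈ K i) →
    ∃ y : H, ∀ i, orthProjCLM (K i) (hK i) y = x i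


/-- A family `v : M → H` is a Riesz family. -/
def IsRieszFamily (𝕜 : Type*) {H : Type*} [RCLike 𝕜] [NormedAddCommGroup H]
    [InnerProductSpace 𝕜 H] {M : Type*} (v : M → H) : Prop :=
  ∃ ε : ℝ, 0 < ε ∧ ∃ C : ℝ, 0 < C ∧ ∀ (F : Finset M) (a : M → 𝕜),
    ε * Real.sqrt (∑ α ∈ F, ‖a α‖ ^ 2) ≤ ‖∑ α ∈ F, a α • v α‖ ∧
    ‖∑ α ∈ F, a α • v α‖ ≤ C * Real.sqrt (∑ α ∈ F, ‖a α‖ ^ 2)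

open scoped InnerProductSpace

/-- if the system `K` has the IBAP and each `v i` is a Riesz
family in `K i`, then the combined family is a Riesz family. -/
theorem stmt_11 {𝕜 H : Type*} [RCLike 𝕜] [NormedAddCommGroup H]
    [InnerProductSpace 𝕜 H] [CompleteSpace H] {n : ℕ}
    (K : Fin n → Submodule 𝕜 H) (hK : ∀ i, IsClosed ((K i : Set H)))
    (hIBAP : IBAP K hK)
    (M : Fin n → Type*) (v : ∀ i, M i → H)
    (hv : ∀ i α, v i α ∈ K i)
    (hRiesz : ∀ i, IsRieszFamily 𝕜 (v i)) :
    IsRieszFamily 𝕜 (fun p : Σ i, M i => v p.1 p.2) := by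
  classical
  choose ε hε C hC hb using hRiesz
  haveI : ∀ i, CompleteSpace (K i) := fun i => (hK i).completeSpace_coe
  rcases isEmpty_or_nonempty (Fin n) with hn | hn
  · refine ⟨1, one_pos, 1, one_pos, fun F a => ?_⟩
    haveI : IsEmpty (Σ i, M i) := ⟨fun p => hn.elim p.1⟩
    have hF : F = ∅ := Finset.eq_empty_of_isEmpty F
    subst hF; simp
  -- the analysis operator
  set T : H →L[𝕜] PiLp 2 (fun i => K i) :=
      ((PiLp.continuousLinearEquiv 2 𝕜 (fun i => (K i : Type _))).symm :
        (∀ i, K i) →L[𝕜] PiLp 2 fun i => K i).comp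
        (ContinuousLinearMap.pi fun i => (K i).orthogonalProjection) with hT
  have hTapp : ∀ (y : H) (i : Fin n), T y i = (K i).orthogonalProjection y := fun y i => rfl
  have hsurj : Function.Surjective T := by
    intro z
    obtain ⟨y, hy⟩ := hIBAP (fun i => (z i : H)) (fun i => (z i).2)
    refine ⟨y, PiLp.ext fun i => Subtype.ext ?_⟩
    have : (((K i).orthogonalProjection y : K i) : H) = z i := by
      simpa [orthProjCLM] using hy i
    simpa [hTapp] using this
  haveI : CompleteSpace (PiLp 2 fun i => K i) :=
    inferInstance
  obtain ⟨c, hc, hpre⟩ := T.exists_preimage_norm_le hsurj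
  -- the constants
  set εm : ℝ := Finset.univ.inf' Finset.univ_nonempty ε with hεm
  have hεm0 : 0 < εm := by
    rw [hεm, Finset.lt_inf'_iff]
    exact fun i _ => hε i
  have hεmle : ∀ i, εm ≤ ε i := fun i =>
    Finset.inf'_le _ (Finset.mem_univ i)
  refine ⟨εm / c, div_pos hεm0 hc, ∑ i, C i,
    Finset.sum_pos (fun i _ => hC i) Finset.univ_nonempty, fun F a => ?_⟩
  -- decompose the finset
  set G : ∀ i, Finset (M i) :=
    fun i => F.preimage (Sigma.mk i) (Set.injOn_of_injective sigma_mk_injective) with hG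
  have hFsig : F = Finset.univ.sigma G := by
    ext ⟨i, α⟩
    simp [hG, Finset.mem_sigma, Finset.mem_preimage]
  set x : ∀ i, H := fun i => ∑ α ∈ G i, a ⟨i, α⟩ • v i α with hx
  have hxK : ∀ i, x i ∈ K i := fun i =>
    Submodule.sum_mem _ fun α _ => Submodule.smul_mem _ _ (hv i α)
  have hs : ∑ p ∈ F, a p • v p.1 p.2 = ∑ i, x i := by
    rw [hFsig, Finset.sum_sigma]
  have hS : ∑ p ∈ F, ‖a p‖ ^ 2 = ∑ i, ∑ α ∈ G i, ‖a ⟨i, α⟩‖ ^ 2 := by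
    rw [hFsig, Finset.sum_sigma]
  set S : ℝ := ∑ p ∈ F, ‖a p‖ ^ 2 with hSdef
  have hS0 : 0 ≤ S := Finset.sum_nonneg fun p _ => sq_nonneg _
  have hSi0 : ∀ i, (0 : ℝ) ≤ ∑ α ∈ G i, ‖a ⟨i, α⟩‖ ^ 2 :=
    fun i => Finset.sum_nonneg fun α _ => sq_nonneg _
  have hSile : ∀ i, ∑ α ∈ G i, ‖a ⟨i, α⟩‖ ^ 2 ≤ S := by
    intro i
    calc ∑ α ∈ G i, ‖a ⟨i, α⟩‖ ^ 2
        ≤ ∑ j, ∑ α ∈ G j, ‖a ⟨j, α⟩‖ ^ 2 :=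
          Finset.single_le_sum (f := fun j => ∑ α ∈ G j, ‖a ⟨j, α⟩‖ ^ 2)
            (fun j _ => hSi0 j) (Finset.mem_univ i)
      _ = S := by rw [hSdef, hFsig, Finset.sum_sigma]
  constructor
  · -- lower bound
    rw [hs]
    set z : PiLp 2 (fun i => K i) :=
      (WithLp.equiv 2 (∀ i, K i)).symm (fun i => ⟨x i, hxK i⟩) with hz
    obtain ⟨y, hy, hynorm⟩ := hpre z
    have hyi : ∀ i, ((K i).orthogonalProjection y : H) = x i := by
      intro i
      have : T y i = z i := congrArg (fun w => w i) hy
      rw [hTapp] at this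
      exact congrArg Subtype.val this
    have hzn : ‖z‖ = Real.sqrt (∑ i, ‖x i‖ ^ 2) := by
      rw [PiLp.norm_eq_of_L2]
      congr 1
    have hN : (∑ i, ‖x i‖ ^ 2) = RCLike.re (⟪y, ∑ i, x i⟫_𝕜) := by
      rw [inner_sum, map_sum]
      refine Finset.sum_congr rfl fun i _ => ?_
      have h2 : (⟪y, x i⟫_𝕜) = ⟪x i, x i⟫_𝕜 := by
        have h3 := Submodule.starProjection_inner_eq_zero y (x i) (hxK i)
        rw [Submodule.starProjection_apply] at h3
        rw [inner_sub_left, sub_eq_zero] at h3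
        rw [h3, hyi i]
      rw [h2, inner_self_eq_norm_sq]
    set N : ℝ := ∑ i, ‖x i‖ ^ 2 with hNdef
    have hN0 : 0 ≤ N := Finset.sum_nonneg fun i _ => sq_nonneg _
    have key : N ≤ c * Real.sqrt N * ‖∑ i, x i‖ := by
      calc N = RCLike.re (⟪y, ∑ i, x i⟫_𝕜) := hN
        _ ≤ ‖y‖ * ‖∑ i, x i‖ := re_inner_le_norm _ _
        _ ≤ (c * ‖z‖) * ‖∑ i, x i‖ := by
            exact mul_le_mul_of_nonneg_right hynorm (norm_nonneg _)
        _ = c * Real.sqrt N * ‖∑ i, x i‖ := by rw [hzn]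
    have hsqrtN : Real.sqrt N ≤ c * ‖∑ i, x i‖ := by
      rcases eq_or_lt_of_le hN0 with h0 | h0
      · rw [← h0, Real.sqrt_zero]
        positivity
      · have hsq : 0 < Real.sqrt N := Real.sqrt_pos.2 h0
        have : Real.sqrt N * Real.sqrt N ≤ (c * ‖∑ i, x i‖) * Real.sqrt N := by
          rw [Real.mul_self_sqrt hN0]
          calc N ≤ c * Real.sqrt N * ‖∑ i, x i‖ := key
            _ = (c * ‖∑ i, x i‖) * Real.sqrt N := by ring
        exact le_of_mul_le_mul_right this hsq
    have hεS : εm * Real.sqrt S ≤ Real.sqrt N := by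
      have h1 : εm ^ 2 * S ≤ N := by
        have hS' : S = ∑ i, ∑ α ∈ G i, ‖a ⟨i, α⟩‖ ^ 2 := by
          rw [hSdef, hFsig, Finset.sum_sigma]
        rw [hS', Finset.mul_sum, hNdef]
        refine Finset.sum_le_sum fun i _ => ?_
        have h2 : ε i * Real.sqrt (∑ α ∈ G i, ‖a ⟨i, α⟩‖ ^ 2) ≤ ‖x i‖ :=
          (hb i (G i) (fun α => a ⟨i, α⟩)).1
        have h3 : (ε i * Real.sqrt (∑ α ∈ G i, ‖a ⟨i, α⟩‖ ^ 2)) ^ 2 ≤ ‖x i‖ ^ 2 := by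
          apply sq_le_sq' _ h2
          have : 0 ≤ ε i * Real.sqrt (∑ α ∈ G i, ‖a ⟨i, α⟩‖ ^ 2) :=
            mul_nonneg (hε i).le (Real.sqrt_nonneg _)
          linarith [norm_nonneg (x i)]
        rw [mul_pow, Real.sq_sqrt (hSi0 i)] at h3
        calc εm ^ 2 * (∑ α ∈ G i, ‖a ⟨i, α⟩‖ ^ 2)
            ≤ ε i ^ 2 * (∑ α ∈ G i, ‖a ⟨i, α⟩‖ ^ 2) := by
              apply mul_le_mul_of_nonneg_right _ (hSi0 i)
              exact pow_le_pow_left₀ hεm0.le (hεmle i) 2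
          _ ≤ ‖x i‖ ^ 2 := h3
      calc εm * Real.sqrt S = Real.sqrt (εm ^ 2 * S) := by
            rw [Real.sqrt_mul (sq_nonneg _), Real.sqrt_sq hεm0.le]
        _ ≤ Real.sqrt N := Real.sqrt_le_sqrt h1
    rw [div_mul_eq_mul_div, div_le_iff₀ hc]
    calc εm * Real.sqrt S ≤ Real.sqrt N := hεS
      _ ≤ c * ‖∑ i, x i‖ := hsqrtN
      _ = ‖∑ i, x i‖ * c := mul_comm _ _
  · -- upper bound
    rw [hs]
    calc ‖∑ i, x i‖ ≤ ∑ i, ‖x i‖ := norm_sum_le _ _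
      _ ≤ ∑ i, C i * Real.sqrt S := by
          refine Finset.sum_le_sum fun i _ => ?_
          calc ‖x i‖ ≤ C i * Real.sqrt (∑ α ∈ G i, ‖a ⟨i, α⟩‖ ^ 2) :=
                (hb i (G i) (fun α => a ⟨i, α⟩)).2
            _ ≤ C i * Real.sqrt S :=
                mul_le_mul_of_nonneg_left (Real.sqrt_le_sqrt (hSile i)) (hC i).le
      _ = (∑ i, C i) * Real.sqrt S := by rw [← Finset.sum_mul]
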